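/- Fix an integer 0 ≤ i ≤ k−1 and vertices u, v, x, y ∈ A_i such that d_G(u, v) < d_G(u, A_{i+1})/2 and d_G(x, y) < d_G(x, A_{i+1})/2. Suppose there exists a vertex z ∈ V lying simultaneously on a shortest u–v path and on a shortest x–y path, i.e., d_G(u, z) + d_G(z, v) = d_G(u, v) and d_G(x, z) + d_G(z, y) = d_G(x, y). Then either max{d_G(u, v), d_G(u, x), d_G(u, y)} < d_G(u, A_{i+1}), or max{d_G(x, y), d_G(x, u), d_G(x, v)} < d_G(x, A_{i+1}). -/
import Mathlib


open scoped ENNReal Classical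

namespace ASP

variable {V : Type*}

/-- The total weight of a walk `p`, with edge weights given by `w`. -/
noncomputable def wWeight {G : SimpleGraph V} (w : V → V → ℝ≥0∞) {x y : V}
    (p : G.Walk x y) : ℝ≥0∞ :=
  (p.darts.map fun d => w d.toProd.1 d.toProd.2).sum

/-- The shortest-path distance between `x` and `y` in the graph `G` with edge weights `w`. -/
noncomputable def gdist (G : SimpleGraph V) (w : V → V → ℝ≥0∞) (x y : V) : ℝ≥0∞ :=
  ⨅ p : G.Walk x y, wWeight w p

/-- The maximum edge weight on a walk `p` (zero for the empty walk). -/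
noncomputable def maxW {G : SimpleGraph V} (w : V → V → ℝ≥0∞) {x y : V}
    (p : G.Walk x y) : ℝ≥0∞ :=
  (p.darts.map fun d => w d.toProd.1 d.toProd.2).foldr max 0



lemma wWeight_append {G : SimpleGraph V} (w : V → V → ℝ≥0∞) {a b c : V}
    (p : G.Walk a b) (q : G.Walk b c) :
    wWeight w (p.append q) = wWeight w p + wWeight w q := by
  simp [wWeight, SimpleGraph.Walk.darts_append]

lemma wWeight_reverse {G : SimpleGraph V} {w : V → V → ℝ≥0∞}
    (hwsym : ∀ u v, G.Adj u v → w u v = w v u) {a b : V} (p : G.Walk a b) :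
    wWeight w p.reverse = wWeight w p := by
  unfold wWeight
  rw [SimpleGraph.Walk.darts_reverse, List.map_reverse, List.sum_reverse, List.map_map]
  congr 1
  refine List.map_congr_left fun d hd => ?_
  simp only [Function.comp_apply, SimpleGraph.Dart.symm_toProd, Prod.fst_swap, Prod.snd_swap]
  exact (hwsym d.toProd.1 d.toProd.2 d.adj).symm

lemma gdist_symm {G : SimpleGraph V} {w : V → V → ℝ≥0∞}
    (hwsym : ∀ u v, G.Adj u v → w u v = w v u) (a b : V) :
    gdist G w a b = gdist G w b a := by
  have key : ∀ (s t : V), gdist G w s t ≤ gdist G w t s := by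
    intro s t
    refine le_iInf fun p => ?_
    exact (iInf_le _ p.reverse).trans (le_of_eq (wWeight_reverse hwsym p))
  exact le_antisymm (key a b) (key b a)

lemma gdist_triangle (G : SimpleGraph V) (w : V → V → ℝ≥0∞) (a b c : V) :
    gdist G w a c ≤ gdist G w a b + gdist G w b c := by
  rw [gdist, gdist, gdist, ENNReal.iInf_add]
  simp only [ENNReal.add_iInf]
  exact le_iInf fun p => le_iInf fun q =>
    iInf_le_of_le (p.append q) (le_of_eq (wWeight_append w p q))

/-- Lemma D.1: if `u, v, x, y ∈ A_i` with `d_G(u,v) < d_G(u, A_{i+1})/2` and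
`d_G(x,y) < d_G(x, A_{i+1})/2`, and some vertex `z` lies simultaneously on a shortest `u-v` path
and on a shortest `x-y` path, then either `max{d_G(u,v), d_G(u,x), d_G(u,y)} < d_G(u, A_{i+1})`
or `max{d_G(x,y), d_G(x,u), d_G(x,v)} < d_G(x, A_{i+1})` (the conditions involving the possibly
empty set `A_{i+1}` are expressed pointwise, matching the convention `d_G(u,∅) = ∞`). -/
theorem statement10 [Fintype V] (G : SimpleGraph V) (hconn : G.Connected)
    (w : V → V → ℝ≥0∞) (hwsym : ∀ u v, G.Adj u v → w u v = w v u)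
    (hwfin : ∀ u v, G.Adj u v → w u v ≠ ⊤)
    (k : ℕ) (hk : 1 ≤ k) (A : ℕ → Set V) (hA0 : A 0 = Set.univ)
    (hAnest : ∀ i, A (i + 1) ⊆ A i) (hAk : A k = ∅)
    (i : ℕ) (hi : i < k) (u v x y : V)
    (hu : u ∈ A i) (hv : v ∈ A i) (hx : x ∈ A i) (hy : y ∈ A i)
    (huv : ∀ a ∈ A (i + 1), gdist G w u v < gdist G w u a / 2)
    (hxy : ∀ a ∈ A (i + 1), gdist G w x y < gdist G w x a / 2)
    (z : V)
    (hzuv : gdist G w u z + gdist G w z v = gdist G w u v)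
    (hzxy : gdist G w x z + gdist G w z y = gdist G w x y) :
    (∀ a ∈ A (i + 1), gdist G w u v < gdist G w u a ∧ gdist G w u x < gdist G w u a ∧
        gdist G w u y < gdist G w u a) ∨
      (∀ a ∈ A (i + 1), gdist G w x y < gdist G w x a ∧ gdist G w x u < gdist G w x a ∧
        gdist G w x v < gdist G w x a) := by
  -- abbreviation
  set d := gdist G w with hd
  have hsym : ∀ a b, d a b = d b a := gdist_symm hwsym
  have htri : ∀ a b c, d a c ≤ d a b + d b c := gdist_triangle G w
  have huz : d u z ≤ d u v := hzuv ▸ le_self_add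
  have hzv : d z v ≤ d u v := hzuv ▸ le_add_self
  have hxz : d x z ≤ d x y := hzxy ▸ le_self_add
  have hzy : d z y ≤ d x y := hzxy ▸ le_add_self
  rcases le_total (d x y) (d u v) with hle | hle
  · left
    intro a ha
    have h1 : d u v < d u a := lt_of_lt_of_le (huv a ha) (ENNReal.half_le_self)
    have h2 : d u v * 2 < d u a := ENNReal.mul_lt_of_lt_div (huv a ha)
    have hb : d u v + d x y ≤ d u v * 2 := by
      rw [mul_two]; exact add_le_add le_rfl hle
    refine ⟨h1, ?_, ?_⟩
    · calc d u x ≤ d u z + d z x := htri u z x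
        _ = d u z + d x z := by rw [hsym z x]
        _ ≤ d u v + d x y := add_le_add huz hxz
        _ ≤ d u v * 2 := hb
        _ < d u a := h2
    · calc d u y ≤ d u z + d z y := htri u z y
        _ ≤ d u v + d x y := add_le_add huz hzy
        _ ≤ d u v * 2 := hb
        _ < d u a := h2
  · right
    intro a ha
    have h1 : d x y < d x a := lt_of_lt_of_le (hxy a ha) (ENNReal.half_le_self)
    have h2 : d x y * 2 < d x a := ENNReal.mul_lt_of_lt_div (hxy a ha)
    have hb : d x y + d u v ≤ d x y * 2 := by
      rw [mul_two]; exact add_le_add le_rfl hle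
    refine ⟨h1, ?_, ?_⟩
    · calc d x u ≤ d x z + d z u := htri x z u
        _ = d x z + d u z := by rw [hsym z u]
        _ ≤ d x y + d u v := add_le_add hxz huz
        _ ≤ d x y * 2 := hb
        _ < d x a := h2
    · calc d x v ≤ d x z + d z v := htri x z v
        _ ≤ d x y + d u v := add_le_add hxz hzv
        _ ≤ d x y * 2 := hb
        _ < d x a := h2


end ASP
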